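/- Let φ₁ : ℝᵖ → ℝ be differentiable with L-Lipschitz gradient and 0 < γ < 1/L. Then prox_{γφ₁} is single-valued and (1/(1+γL))-strongly monotone, i.e. ⟨prox_{γφ₁}(s) − prox_{γφ₁}(s'), s − s'⟩ ≥ (1/(1+γL))‖s−s'‖² for all s, s'; in particular ‖prox_{γφ₁}(s) − prox_{γφ₁}(s')‖ ≥ (1/(1+γL))‖s−s'‖. -/

import Mathlib

open scoped RealInnerProductSpace
open Filter Topology

/-- The convex (Fenchel) conjugate of an extended-real-valued function. -/
noncomputable def eConj {n : ℕ} (h : EuclideanSpace ℝ (Fin n) → EReal)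
    (y : EuclideanSpace ℝ (Fin n)) : EReal :=
  ⨆ x, ((⟪y, x⟫ : ℝ) : EReal) - h x

/-- `h` is proper: nowhere `⊥` and not identically `⊤`. -/
def ProperFn {n : ℕ} (h : EuclideanSpace ℝ (Fin n) → EReal) : Prop :=
  (∃ x, h x ≠ ⊤) ∧ ∀ x, h x ≠ ⊥

/-- Convexity for extended-real-valued functions. -/
def EConvexOn {n : ℕ} (h : EuclideanSpace ℝ (Fin n) → EReal) : Prop :=
  ∀ x y : EuclideanSpace ℝ (Fin n), ∀ a b : ℝ, 0 ≤ a → 0 ≤ b → a + b = 1 →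
    h (a • x + b • y) ≤ (a : EReal) * h x + (b : EReal) * h y

/-- `u ∈ prox_{γ h}(x)` for an extended-real-valued `h`. -/
def IsProx {n : ℕ} (h : EuclideanSpace ℝ (Fin n) → EReal) (γ : ℝ)
    (x u : EuclideanSpace ℝ (Fin n)) : Prop :=
  ∀ w, h u + ((‖u - x‖ ^ 2 / (2 * γ) : ℝ) : EReal) ≤ h w + ((‖w - x‖ ^ 2 / (2 * γ) : ℝ) : EReal)

/-- `u = prox_{γ h}(x)` for a real-valued `h`. -/
def IsProxR {n : ℕ} (h : EuclideanSpace ℝ (Fin n) → ℝ) (γ : ℝ)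
    (x u : EuclideanSpace ℝ (Fin n)) : Prop :=
  ∀ w, h u + ‖u - x‖ ^ 2 / (2 * γ) ≤ h w + ‖w - x‖ ^ 2 / (2 * γ)

/-- The Moreau envelope `h^γ`. -/
noncomputable def moreauEnv {n : ℕ} (h : EuclideanSpace ℝ (Fin n) → EReal) (γ : ℝ)
    (x : EuclideanSpace ℝ (Fin n)) : EReal :=
  ⨅ w, h w + ((‖w - x‖ ^ 2 / (2 * γ) : ℝ) : EReal)

/-- The Douglas–Rachford envelope value at `s`, given the prox points `u, v`. -/
noncomputable def dre {n : ℕ} (φ₁ φ₂ : EuclideanSpace ℝ (Fin n) → EReal) (γ : ℝ)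
    (s u v : EuclideanSpace ℝ (Fin n)) : EReal :=
  φ₁ u + φ₂ v + (((1 / γ) * ⟪s - u, v - u⟫ + ‖v - u‖ ^ 2 / (2 * γ) : ℝ) : EReal)

/-- `v` belongs to the regular (Fréchet) subdifferential of `h` at `x̄`. -/
def RegSubdiffAt {n : ℕ} (h : EuclideanSpace ℝ (Fin n) → EReal)
    (xbar v : EuclideanSpace ℝ (Fin n)) : Prop :=
  ∀ ε : ℝ, 0 < ε → ∀ᶠ x in nhds xbar,
    h xbar + ((⟪v, x - xbar⟫ - ε * ‖x - xbar‖ : ℝ) : EReal) ≤ h x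

/-- `μ`-strong convexity for extended-real-valued functions. -/
def EStrongConvexOn {n : ℕ} (μ : ℝ) (h : EuclideanSpace ℝ (Fin n) → EReal) : Prop :=
  EConvexOn (fun x => h x - ((μ / 2 * ‖x‖ ^ 2 : ℝ) : EReal))

variable {n : ℕ}

lemma line_deriv {φ : EuclideanSpace ℝ (Fin n) → ℝ} {g : EuclideanSpace ℝ (Fin n)}
    (x y : EuclideanSpace ℝ (Fin n)) (t : ℝ)
    (h : HasGradientAt φ g (x + t • (y - x))) :
    HasDerivAt (fun t : ℝ => φ (x + t • (y - x))) ⟪g, y - x⟫ t := by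
  have hc : HasDerivAt (fun t : ℝ => x + t • (y - x)) (y - x) t := by
    simpa using ((hasDerivAt_id t).smul_const (y - x)).const_add x
  have := h.hasFDerivAt.comp_hasDerivAt t hc
  exact this

lemma descent_lower {φ : EuclideanSpace ℝ (Fin n) → ℝ}
    {f' : EuclideanSpace ℝ (Fin n) → EuclideanSpace ℝ (Fin n)} {L : ℝ} (hL : 0 < L)
    (hdiff : ∀ x, HasGradientAt φ (f' x) x)
    (hlip : ∀ x y, ‖f' x - f' y‖ ≤ L * ‖x - y‖)
    (x y : EuclideanSpace ℝ (Fin n)) :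
    φ x + ⟪f' x, y - x⟫ - L / 2 * ‖y - x‖ ^ 2 ≤ φ y := by
  set c : ℝ := ⟪f' x, y - x⟫ with hc
  set q : ℝ := ‖y - x‖ ^ 2 with hq
  set E : ℝ → ℝ := fun t => φ (x + t • (y - x)) - t * c + L / 2 * (t ^ 2 * q) with hE
  have hderivE : ∀ t : ℝ, HasDerivAt E (⟪f' (x + t • (y - x)), y - x⟫ - c + L / 2 * (2 * t * q)) t := by
    intro t
    have h1 := line_deriv (φ := φ) x y t (hdiff _)
    have h2 : HasDerivAt (fun t : ℝ => t * c) c t := by simpa using (hasDerivAt_id t).mul_const c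
    have h3 : HasDerivAt (fun t : ℝ => L / 2 * (t ^ 2 * q)) (L / 2 * (2 * t * q)) t := by
      have : HasDerivAt (fun t : ℝ => t ^ 2 * q) (2 * t * q) t := by
        simpa using (hasDerivAt_pow 2 t).mul_const q
      exact this.const_mul (L / 2)
    exact (h1.sub h2).add h3
  have mono : MonotoneOn E (Set.Icc (0:ℝ) 1) := by
    apply monotoneOn_of_deriv_nonneg (convex_Icc 0 1)
    · exact fun t _ => (hderivE t).continuousAt.continuousWithinAt
    · intro t _
      exact (hderivE t).differentiableAt.differentiableWithinAt
    · intro t ht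
      rw [interior_Icc] at ht
      rw [(hderivE t).deriv]
      have hlipt : ‖f' (x + t • (y - x)) - f' x‖ ≤ L * (t * ‖y - x‖) := by
        have h := hlip (x + t • (y - x)) x
        have : ‖x + t • (y - x) - x‖ = t * ‖y - x‖ := by
          rw [add_sub_cancel_left, norm_smul, Real.norm_eq_abs, abs_of_pos ht.1]
        rw [this] at h; exact h
      have hinner : ⟪f' (x + t • (y - x)), y - x⟫ - c = ⟪f' (x + t • (y - x)) - f' x, y - x⟫ := by
        rw [inner_sub_left]
      have hcs := abs_real_inner_le_norm (f' (x + t • (y - x)) - f' x) (y - x)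
      have hnn : (0:ℝ) ≤ ‖y - x‖ := norm_nonneg _
      rw [hinner]
      have habs : |⟪f' (x + t • (y - x)) - f' x, y - x⟫| ≤ L * (t * ‖y - x‖) * ‖y - x‖ :=
        hcs.trans (by nlinarith)
      have hneg := neg_abs_le ⟪f' (x + t • (y - x)) - f' x, y - x⟫
      have hqq : L / 2 * (2 * t * q) = L * (t * ‖y - x‖) * ‖y - x‖ := by rw [hq]; ring
      linarith
  have h01 := mono (Set.mem_Icc.2 ⟨le_refl 0, zero_le_one⟩) (Set.mem_Icc.2 ⟨zero_le_one, le_refl 1⟩) zero_le_one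
  have hE0 : E 0 = φ x := by simp [hE]
  have hE1 : E 1 = φ y - c + L / 2 * q := by simp [hE]
  rw [hE0, hE1] at h01
  linarith

lemma descent_upper {φ : EuclideanSpace ℝ (Fin n) → ℝ}
    {f' : EuclideanSpace ℝ (Fin n) → EuclideanSpace ℝ (Fin n)} {L : ℝ} (hL : 0 < L)
    (hdiff : ∀ x, HasGradientAt φ (f' x) x)
    (hlip : ∀ x y, ‖f' x - f' y‖ ≤ L * ‖x - y‖)
    (x y : EuclideanSpace ℝ (Fin n)) :
    φ y ≤ φ x + ⟪f' x, y - x⟫ + L / 2 * ‖y - x‖ ^ 2 := by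
  have hdiff' : ∀ z, HasGradientAt (fun w => -φ w) (-f' z) z := by
    intro z
    rw [hasGradientAt_iff_hasFDerivAt] at *
    have := (hdiff z).hasFDerivAt.neg
    simp only [map_neg]
    exact this
  have hlip' : ∀ a b : EuclideanSpace ℝ (Fin n), ‖-f' a - -f' b‖ ≤ L * ‖a - b‖ := by
    intro a b
    have := hlip a b
    rwa [show -f' a - -f' b = -(f' a - f' b) by abel, norm_neg]
  have := descent_lower hL hdiff' hlip' x y
  simp only [inner_neg_left] at this
  linarith


set_option maxHeartbeats 1000000 in
lemma prox_stationary {φ : EuclideanSpace ℝ (Fin n) → ℝ}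
    {f' : EuclideanSpace ℝ (Fin n) → EuclideanSpace ℝ (Fin n)} {L : ℝ} (hL : 0 < L)
    (hdiff : ∀ x, HasGradientAt φ (f' x) x)
    (hlip : ∀ x y, ‖f' x - f' y‖ ≤ L * ‖x - y‖)
    {γ : ℝ} (hγ0 : 0 < γ)
    {x u : EuclideanSpace ℝ (Fin n)} (hu : IsProxR φ γ x u) :
    x = u + γ • f' u := by
  set v : EuclideanSpace ℝ (Fin n) := f' u + γ⁻¹ • (u - x) with hv
  have hP : (0:ℝ) < 1 + γ * L := by positivity
  set t : ℝ := min 1 (γ / (1 + γ * L)) with htdef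
  have ht : 0 < t := lt_min one_pos (by positivity)
  have htγ : t * (1 + γ * L) ≤ γ := by
    have h1 : t ≤ γ / (1 + γ * L) := min_le_right _ _
    calc t * (1 + γ * L) ≤ (γ / (1 + γ * L)) * (1 + γ * L) :=
          mul_le_mul_of_nonneg_right h1 hP.le
      _ = γ := by field_simp
  set w : EuclideanSpace ℝ (Fin n) := u - t • v with hw
  set N : ℝ := ‖v‖ ^ 2 with hN
  set I : ℝ := ⟪u - x, v⟫ with hI
  set J : ℝ := ⟪f' u, v⟫ with hJ
  clear_value v t w N I J
  have hJI : γ * J + I = γ * N := by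
    have h0 : J + γ⁻¹ * I = N := by
      rw [hJ, hI, hN, ← real_inner_smul_left, ← inner_add_left, ← hv,
        real_inner_self_eq_norm_sq]
    have h1 : γ * (J + γ⁻¹ * I) = γ * N := by rw [h0]
    rw [mul_add, ← mul_assoc, mul_inv_cancel₀ (ne_of_gt hγ0), one_mul] at h1
    exact h1
  have hWU : w - u = (-t) • v := by rw [hw]; module
  have hK : ⟪f' u, w - u⟫ = -t * J := by rw [hWU, real_inner_smul_right, hJ]
  have hW : ‖w - u‖ ^ 2 = t ^ 2 * N := by
    rw [hWU, hN, norm_smul, Real.norm_eq_abs, mul_pow, sq_abs]; ring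
  have hQ : ‖w - x‖ ^ 2 = ‖u - x‖ ^ 2 - 2 * t * I + t ^ 2 * N := by
    have h1 : w - x = (u - x) - t • v := by rw [hw]; abel
    rw [h1, @norm_sub_sq_real, real_inner_smul_right, ← hI, norm_smul,
      Real.norm_eq_abs, mul_pow, sq_abs, ← hN]
    ring
  have hB := descent_upper hL hdiff hlip u w
  rw [hK, hW] at hB
  have h2γ : (0:ℝ) < 2 * γ := by linarith
  have hA' : ‖u - x‖ ^ 2 - ‖w - x‖ ^ 2 ≤ 2 * γ * (φ w - φ u) := by
    have h3 : ‖u - x‖ ^ 2 / (2 * γ) - ‖w - x‖ ^ 2 / (2 * γ) ≤ φ w - φ u := by linarith [hu w]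
    have h4 := mul_le_mul_of_nonneg_left h3 h2γ.le
    calc ‖u - x‖ ^ 2 - ‖w - x‖ ^ 2
        = 2 * γ * (‖u - x‖ ^ 2 / (2 * γ) - ‖w - x‖ ^ 2 / (2 * γ)) := by field_simp
      _ ≤ 2 * γ * (φ w - φ u) := h4
  rw [hQ] at hA'
  have hfin : 2 * t * γ * N ≤ t ^ 2 * N * (1 + γ * L) := by nlinarith [hA', hB, hJI]
  have hN0 : (0:ℝ) ≤ N := by rw [hN]; positivity
  have h5 : t * (1 + γ * L) * (t * N) ≤ γ * (t * N) :=
    mul_le_mul_of_nonneg_right htγ (mul_nonneg ht.le hN0)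
  have h6 : γ * t * N ≤ 0 := by nlinarith [h5, hfin]
  have hNle : N ≤ 0 := by
    by_contra h
    push_neg at h
    exact absurd h6 (not_le.mpr (by nlinarith [mul_pos (mul_pos hγ0 ht) h]))
  have hv0 : v = 0 := by
    have hnv : N = 0 := le_antisymm hNle hN0
    rw [hN] at hnv
    exact norm_eq_zero.mp ((pow_eq_zero_iff two_ne_zero).mp hnv)
  rw [hv] at hv0
  have h2 := congrArg (fun z : EuclideanSpace ℝ (Fin n) => γ • z) hv0
  simp only [smul_add, smul_zero, smul_smul, mul_inv_cancel₀ (ne_of_gt hγ0), one_smul] at h2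
  have hfu : γ • f' u = x - u := by
    rw [eq_sub_iff_add_eq]
    have : γ • f' u + (u - x) + x = 0 + x := by rw [h2]
    rw [zero_add] at this
    rw [← this]; abel
  rw [hfu]; abel

lemma stationary_isProx {φ : EuclideanSpace ℝ (Fin n) → ℝ}
    {f' : EuclideanSpace ℝ (Fin n) → EuclideanSpace ℝ (Fin n)} {L : ℝ} (hL : 0 < L)
    (hdiff : ∀ x, HasGradientAt φ (f' x) x)
    (hlip : ∀ x y, ‖f' x - f' y‖ ≤ L * ‖x - y‖)
    {γ : ℝ} (hγ0 : 0 < γ) (hγL : γ * L < 1)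
    {x u : EuclideanSpace ℝ (Fin n)} (hx : x = u + γ • f' u) :
    IsProxR φ γ x u := by
  intro w
  have h2γ : (0:ℝ) < 2 * γ := by linarith
  set K : ℝ := ⟪f' u, w - u⟫ with hK
  set W : ℝ := ‖w - u‖ ^ 2 with hW2
  have hlow : φ u + K - L / 2 * W ≤ φ w := descent_lower hL hdiff hlip u w
  have hux : u - x = (-γ) • f' u := by rw [hx]; module
  have hexp : ‖w - x‖ ^ 2 = ‖u - x‖ ^ 2 - 2 * γ * K + W := by
    have h1 : w - x = (u - x) + (w - u) := by abel
    rw [h1, @norm_add_sq_real, hux, real_inner_smul_left, ← hK, ← hW2]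
    ring
  have hWnn : (0:ℝ) ≤ W := by rw [hW2]; positivity
  have key : 2 * γ * φ u + ‖u - x‖ ^ 2 ≤ 2 * γ * φ w + ‖w - x‖ ^ 2 := by
    rw [hexp]
    nlinarith [mul_nonneg hWnn (le_of_lt (sub_pos.mpr hγL))]
  calc φ u + ‖u - x‖ ^ 2 / (2 * γ) = (2 * γ * φ u + ‖u - x‖ ^ 2) / (2 * γ) := by
        field_simp
    _ ≤ (2 * γ * φ w + ‖w - x‖ ^ 2) / (2 * γ) := by
        gcongr
    _ = φ w + ‖w - x‖ ^ 2 / (2 * γ) := by field_simp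

lemma prox_exists {φ : EuclideanSpace ℝ (Fin n) → ℝ}
    {f' : EuclideanSpace ℝ (Fin n) → EuclideanSpace ℝ (Fin n)} {L : ℝ} (hL : 0 < L)
    (hdiff : ∀ x, HasGradientAt φ (f' x) x)
    (hlip : ∀ x y, ‖f' x - f' y‖ ≤ L * ‖x - y‖)
    {γ : ℝ} (hγ0 : 0 < γ) (hγL : γ * L < 1)
    (x : EuclideanSpace ℝ (Fin n)) : ∃ u, IsProxR φ γ x u := by
  set K : NNReal := ⟨γ * L, le_of_lt (mul_pos hγ0 hL)⟩ with hKdef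
  set T : EuclideanSpace ℝ (Fin n) → EuclideanSpace ℝ (Fin n) :=
    fun u => x - γ • f' u with hT
  have hlipT : LipschitzWith K T := by
    apply LipschitzWith.of_dist_le_mul
    intro a b
    have h1 : T a - T b = γ • (f' b - f' a) := by rw [hT]; module
    rw [dist_eq_norm, dist_eq_norm, h1, norm_smul, Real.norm_eq_abs, abs_of_pos hγ0]
    have h2 : ‖f' b - f' a‖ ≤ L * ‖b - a‖ := hlip b a
    calc γ * ‖f' b - f' a‖ ≤ γ * (L * ‖b - a‖) := mul_le_mul_of_nonneg_left h2 hγ0.le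
      _ = (K : ℝ) * ‖a - b‖ := by rw [norm_sub_rev b a, hKdef]; show γ * (L * ‖a - b‖) = γ * L * ‖a - b‖; ring
  have hcontr : ContractingWith K T := ⟨by exact_mod_cast hγL, hlipT⟩
  obtain ⟨u, hu⟩ := hcontr.exists_fixedPoint (0 : EuclideanSpace ℝ (Fin n)) (by
    rw [edist_dist]; exact ENNReal.ofReal_ne_top)
  refine ⟨u, stationary_isProx hL hdiff hlip hγ0 hγL ?_⟩
  have h0 : x - γ • f' u = u := hu.1
  exact sub_eq_iff_eq_add.mp h0

/-- `prox_{γφ₁}` is single-valued and `(1/(1+γL))`-strongly monotone for `0 < γ < 1/L`. -/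
theorem prox_strongly_monotone {n : ℕ} (φ₁ : EuclideanSpace ℝ (Fin n) → ℝ)
    (f' : EuclideanSpace ℝ (Fin n) → EuclideanSpace ℝ (Fin n)) (L : ℝ) (hL : 0 < L)
    (hdiff : ∀ x, HasGradientAt φ₁ (f' x) x)
    (hlip : ∀ x y, ‖f' x - f' y‖ ≤ L * ‖x - y‖)
    (γ : ℝ) (hγ0 : 0 < γ) (hγ : γ < 1 / L) :
    (∀ x, ∃ u, IsProxR φ₁ γ x u) ∧
    (∀ x u u', IsProxR φ₁ γ x u → IsProxR φ₁ γ x u' → u = u') ∧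
    (∀ s s' u u', IsProxR φ₁ γ s u → IsProxR φ₁ γ s' u' →
      (1 / (1 + γ * L)) * ‖s - s'‖ ^ 2 ≤ ⟪u - u', s - s'⟫ ∧
      (1 / (1 + γ * L)) * ‖s - s'‖ ≤ ‖u - u'‖) := by
  have hγL : γ * L < 1 := (lt_div_iff₀ hL).mp hγ
  have hP : (0:ℝ) < 1 + γ * L := by positivity
  refine ⟨fun x => prox_exists hL hdiff hlip hγ0 hγL x, ?_, ?_⟩
  · intro x u u' hu hu'
    have h1 := prox_stationary hL hdiff hlip hγ0 hu
    have h2 := prox_stationary hL hdiff hlip hγ0 hu'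
    have h3 : u + γ • f' u = u' + γ • f' u' := h1.symm.trans h2
    have hd : u - u' = γ • (f' u' - f' u) := by
      have h4 := congrArg (fun z : EuclideanSpace ℝ (Fin n) => z - u' - γ • f' u) h3
      calc u - u' = u + γ • f' u - u' - γ • f' u := by abel
        _ = u' + γ • f' u' - u' - γ • f' u := h4
        _ = γ • (f' u' - f' u) := by rw [smul_sub]; abel
    have hnorm : ‖u - u'‖ ≤ γ * L * ‖u - u'‖ := by
      calc ‖u - u'‖ = γ * ‖f' u' - f' u‖ := by
            rw [hd, norm_smul, Real.norm_eq_abs, abs_of_pos hγ0]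
        _ ≤ γ * (L * ‖u' - u‖) := mul_le_mul_of_nonneg_left (hlip u' u) hγ0.le
        _ = γ * L * ‖u - u'‖ := by rw [norm_sub_rev]; ring
    have h5 : ‖u - u'‖ = 0 := by nlinarith [norm_nonneg (u - u')]
    exact sub_eq_zero.mp (norm_eq_zero.mp h5)
  · intro s s' u u' hu hu'
    have h1 := prox_stationary hL hdiff hlip hγ0 hu
    have h2 := prox_stationary hL hdiff hlip hγ0 hu'
    have hss : s - s' = (u - u') + γ • (f' u - f' u') := by rw [h1, h2]; module
    have hE : ‖f' u - f' u'‖ ≤ L * ‖u - u'‖ := hlip u u'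
    have hCS : ⟪u - u', f' u - f' u'⟫ ≤ ‖u - u'‖ * ‖f' u - f' u'‖ := real_inner_le_norm _ _
    have I1 : ⟪u - u', s - s'⟫ = ‖u - u'‖ ^ 2 + γ * ⟪u - u', f' u - f' u'⟫ := by
      rw [hss, inner_add_right, real_inner_smul_right, real_inner_self_eq_norm_sq]
    have I2 : ‖s - s'‖ ^ 2 = ‖u - u'‖ ^ 2 + 2 * γ * ⟪u - u', f' u - f' u'⟫
        + γ ^ 2 * ‖f' u - f' u'‖ ^ 2 := by
      rw [hss, @norm_add_sq_real, real_inner_smul_right, norm_smul, Real.norm_eq_abs,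
        mul_pow, sq_abs]
      ring
    constructor
    · rw [div_mul_eq_mul_div, one_mul, div_le_iff₀ hP, I1, I2]
      have h3 : (0:ℝ) ≤ (γ * ‖f' u - f' u'‖ + ‖u - u'‖) * (L * ‖u - u'‖ - ‖f' u - f' u'‖) :=
        mul_nonneg (by positivity) (by linarith)
      have h4 : (1 - γ * L) * ⟪u - u', f' u - f' u'⟫
          ≤ (1 - γ * L) * (‖u - u'‖ * ‖f' u - f' u'‖) :=
        mul_le_mul_of_nonneg_left hCS (by linarith)
      nlinarith [h3, h4, hγ0]
    · rw [div_mul_eq_mul_div, one_mul, div_le_iff₀ hP]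
      have h5 : ‖s - s'‖ ≤ ‖u - u'‖ + γ * ‖f' u - f' u'‖ := by
        calc ‖s - s'‖ = ‖(u - u') + γ • (f' u - f' u')‖ := by rw [hss]
          _ ≤ ‖u - u'‖ + ‖γ • (f' u - f' u')‖ := norm_add_le _ _
          _ = ‖u - u'‖ + γ * ‖f' u - f' u'‖ := by
              rw [norm_smul, Real.norm_eq_abs, abs_of_pos hγ0]
      nlinarith [mul_le_mul_of_nonneg_left hE hγ0.le, norm_nonneg (u - u')]
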